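/- arXiv:2412.19252 — 2 statements merged into one kernel-verified Lean document; each statement's English description precedes it below -/
import Mathlib

section
/- Let ε = (ε_1,...,ε_d) be a random vector in R^d with independent coordinates satisfying E[ε_i] = E[ε_i^3] = 0 for i ≥ 2, E[ε_i^2] = 1 and E[ε_i^4] ≥ 1 + c for all i, where c > 0. Then for every symmetric matrix A ∈ R^{d×d}, E[(ε^T A ε)^2] ≥ min(2, c) · ‖A‖_F^2. -/
open MeasureTheory ProbabilityTheory BigOperators

lemma aux_int_pow {Ω : Type*} [MeasurableSpace Ω] {μ : Measure Ω} [IsProbabilityMeasure μ]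
    (f : Ω → ℝ) (hf : MemLp f 4 μ) (hm : Measurable f) (n : ℕ) (hn : n ≤ 4) :
    Integrable (fun ω => (f ω) ^ n) μ := by
  have h4 : Integrable (fun ω => (f ω) ^ 4) μ := by
    have := hf.integrable_norm_rpow (by norm_num) (by norm_num)
    have heq : ∀ ω, ‖f ω‖ ^ ((4 : ENNReal).toReal) = (f ω) ^ 4 := by
      intro ω
      rw [show ((4 : ENNReal).toReal) = ((4 : ℕ) : ℝ) by norm_num, Real.rpow_natCast,
        Real.norm_eq_abs, ← abs_pow, abs_of_nonneg (by positivity : (0:ℝ) ≤ f ω ^ 4)]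
    have h' : (fun x => ‖f x‖ ^ ((4 : ENNReal).toReal)) = fun ω => (f ω) ^ 4 := funext heq
    rwa [h'] at this
  apply Integrable.mono' ((integrable_const (1:ℝ)).add h4)
    (hm.pow_const n).aestronglyMeasurable
  filter_upwards with ω
  have hx : (0:ℝ) ≤ |f ω| := abs_nonneg _
  rcases le_or_gt (|f ω|) 1 with h | h
  · have : ‖f ω ^ n‖ ≤ 1 := by
      rw [norm_pow, Real.norm_eq_abs]
      exact pow_le_one₀ hx h
    have h4' : (0:ℝ) ≤ f ω ^ 4 := by positivity
    simpa using this.trans (by linarith)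
  · have : ‖f ω ^ n‖ ≤ |f ω| ^ 4 := by
      rw [norm_pow, Real.norm_eq_abs]
      exact pow_le_pow_right₀ h.le hn
    have : ‖f ω ^ n‖ ≤ f ω ^ 4 := by
      rwa [← abs_pow, abs_of_nonneg (by positivity)] at this
    simp only [Pi.add_apply]
    linarith

lemma aux_prod {Ω : Type*} [MeasurableSpace Ω] {μ : Measure Ω} [IsProbabilityMeasure μ]
    {d : ℕ} (ε : Fin d → Ω → ℝ)
    (hindep : iIndepFun ε μ)
    (hmeas : ∀ i, Measurable (ε i))
    (hL4 : ∀ i, MemLp (ε i) 4 μ)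
    (ν : Fin d → ℕ) (hν : ∀ m, ν m ≤ 4) (s : Finset (Fin d)) :
    Integrable (fun ω => ∏ m ∈ s, (ε m ω) ^ ν m) μ ∧
      ∫ ω, ∏ m ∈ s, (ε m ω) ^ ν m ∂μ = ∏ m ∈ s, ∫ ω, (ε m ω) ^ ν m ∂μ := by
  classical
  have gmeas : ∀ m, Measurable (fun ω => (ε m ω) ^ ν m) := fun m => (hmeas m).pow_const _
  have gindep : iIndepFun (fun m ω => (ε m ω) ^ ν m) μ :=
    hindep.comp (fun m x => x ^ ν m) (fun m => measurable_id.pow_const _)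
  have gint : ∀ m, Integrable (fun ω => (ε m ω) ^ ν m) μ :=
    fun m => aux_int_pow (ε m) (hL4 m) (hmeas m) (ν m) (hν m)
  induction s using Finset.cons_induction with
  | empty => simp
  | cons a s ha ih =>
    have hsind : IndepFun ((fun m ω => (ε m ω) ^ ν m) a)
        (∏ j ∈ s, (fun m ω => (ε m ω) ^ ν m) j) μ :=
      (gindep.indepFun_finsetProd_of_notMem gmeas ha).symm
    have hps : (∏ j ∈ s, (fun m ω => (ε m ω) ^ ν m) j) = fun ω => ∏ m ∈ s, (ε m ω) ^ ν m := by
      funext ω; simp [Finset.prod_apply]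
    rw [hps] at hsind
    have hmul : ((fun ω => (ε a ω) ^ ν a) * fun ω => ∏ m ∈ s, (ε m ω) ^ ν m)
        = fun ω => ∏ m ∈ Finset.cons a s ha, (ε m ω) ^ ν m := by
      funext ω; simp only [Finset.prod_cons, Pi.mul_apply]
    have hint : Integrable (fun ω => ∏ m ∈ Finset.cons a s ha, (ε m ω) ^ ν m) μ := by
      rw [← hmul]; exact hsind.integrable_mul (gint a) ih.1
    refine ⟨hint, ?_⟩
    have := hsind.integral_mul_eq_mul_integral (gint a).1 ih.1.1
    rw [hmul] at this
    rw [this, ih.2, Finset.prod_cons]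

lemma aux_cnt_prod {d : ℕ} (x : Fin d → ℝ) (i j k l : Fin d) :
    x i * x j * x k * x l = ∏ m, x m ^ ((if i = m then 1 else 0) + (if j = m then 1 else 0)
      + (if k = m then 1 else 0) + (if l = m then 1 else 0)) := by
  simp only [pow_add, Finset.prod_mul_distrib]
  congr 1 <;> [skip; simp [pow_ite, Finset.prod_ite_eq]]
  congr 1 <;> [skip; simp [pow_ite, Finset.prod_ite_eq]]
  congr 1 <;> simp [pow_ite, Finset.prod_ite_eq]

lemma aux_E4 {Ω : Type*} [MeasurableSpace Ω] {μ : Measure Ω} [IsProbabilityMeasure μ]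
    {d : ℕ} (ε : Fin d → Ω → ℝ)
    (hindep : iIndepFun ε μ)
    (hmeas : ∀ i, Measurable (ε i))
    (hL4 : ∀ i, MemLp (ε i) 4 μ)
    (hmean : ∀ i, ∫ ω, ε i ω ∂μ = 0)
    (h3 : ∀ i, ∫ ω, (ε i ω) ^ 3 ∂μ = 0)
    (h2 : ∀ i, ∫ ω, (ε i ω) ^ 2 ∂μ = 1)
    (i j k l : Fin d) :
    Integrable (fun ω => ε i ω * ε j ω * ε k ω * ε l ω) μ ∧
    ∫ ω, ε i ω * ε j ω * ε k ω * ε l ω ∂μ =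
      (if i = j then (1:ℝ) else 0) * (if k = l then 1 else 0)
      + (if i = k then (1:ℝ) else 0) * (if j = l then 1 else 0)
      + (if i = l then (1:ℝ) else 0) * (if j = k then 1 else 0)
      + (if i = j ∧ j = k ∧ k = l then (∫ ω, (ε i ω) ^ 4 ∂μ) - 3 else 0) := by
  classical
  set ν : Fin d → ℕ := fun m => (if i = m then 1 else 0) + (if j = m then 1 else 0)
      + (if k = m then 1 else 0) + (if l = m then 1 else 0) with hνdef
  have hν : ∀ m, ν m ≤ 4 := by intro m; simp only [hνdef]; split_ifs <;> norm_num
  have hre : (fun ω => ε i ω * ε j ω * ε k ω * ε l ω) = fun ω => ∏ m, (ε m ω) ^ ν m := by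
    funext ω; exact aux_cnt_prod (fun m => ε m ω) i j k l
  obtain ⟨hint, heq⟩ := aux_prod ε hindep hmeas hL4 ν hν Finset.univ
  rw [hre]
  refine ⟨hint, ?_⟩
  rw [show (∫ ω, ∏ m, (ε m ω) ^ ν m ∂μ) = ∏ m, ∫ ω, (ε m ω) ^ ν m ∂μ from heq]
  by_cases hij : i = j
  · by_cases hkl : k = l
    · by_cases hik : i = k
      · -- all equal
        subst hij; subst hik; subst hkl
        have hp : ∏ m, (∫ ω, (ε m ω) ^ ν m ∂μ) = ∫ ω, (ε i ω) ^ 4 ∂μ := by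
          rw [Finset.prod_congr rfl (fun m _ => show (∫ ω, (ε m ω) ^ ν m ∂μ)
              = if i = m then ∫ ω, (ε m ω) ^ 4 ∂μ else 1 by
            by_cases him : i = m
            · subst him; simp [hνdef]
            · simp [hνdef, him])]
          simp
        rw [hp]; simp; ring
      · -- two pairs (i=j) ≠ (k=l)
        subst hij; subst hkl
        have hp : ∏ m, (∫ ω, (ε m ω) ^ ν m ∂μ) = 1 := by
          apply Finset.prod_eq_one
          intro m _
          by_cases him : i = m
          · subst him
            have hki : ¬ k = i := fun h => hik h.symm
            simp [hνdef, hki, h2]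
          · by_cases hkm : k = m
            · subst hkm; simp [hνdef, him, h2]
            · simp [hνdef, him, hkm]
        rw [hp]; simp [hik]
    · -- i = j, k ≠ l : odd count at l
      subst hij
      have hfac : (∫ ω, (ε l ω) ^ ν l ∂μ) = 0 := by
        by_cases hil : i = l
        · have : ν l = 3 := by simp [hνdef, hil, hkl]
          rw [this]; exact h3 l
        · have : ν l = 1 := by simp [hνdef, hil, hkl]
          rw [this]; simpa using hmean l
      rw [Finset.prod_eq_zero (Finset.mem_univ l) hfac]
      by_cases hik : i = k <;> by_cases hil : i = l <;> simp_all
  · by_cases hkl : k = l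
    · -- i ≠ j, k = l : odd count at j
      subst hkl
      have hfac : (∫ ω, (ε j ω) ^ ν j ∂μ) = 0 := by
        by_cases hkj : k = j
        · have : ν j = 3 := by simp [hνdef, hkj, hij]
          rw [this]; exact h3 j
        · have : ν j = 1 := by simp [hνdef, hkj, hij]
          rw [this]; simpa using hmean j
      rw [Finset.prod_eq_zero (Finset.mem_univ j) hfac]
      by_cases hik : i = k <;> by_cases hjk : j = k <;> simp_all
    · by_cases hik : i = k
      · by_cases hjl : j = l
        · -- pairing i=k, j=l
          subst hik; subst hjl
          have hp : ∏ m, (∫ ω, (ε m ω) ^ ν m ∂μ) = 1 := by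
            apply Finset.prod_eq_one
            intro m _
            by_cases him : i = m
            · subst him
              have hji : ¬ j = i := fun h => hij h.symm
              simp [hνdef, hji, h2]
            · by_cases hjm : j = m
              · subst hjm; simp [hνdef, him, h2]
              · simp [hνdef, him, hjm]
          rw [hp]; simp [hij]
        · -- i = k, j ≠ l : odd at j
          have hfac : (∫ ω, (ε j ω) ^ ν j ∂μ) = 0 := by
            have hkj : ¬ k = j := fun h => hij (hik.trans h)
            have hlj : ¬ l = j := fun h => hjl h.symm
            have : ν j = 1 := by simp [hνdef, hkj, hlj, hij]
            rw [this]; simpa using hmean j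
          rw [Finset.prod_eq_zero (Finset.mem_univ j) hfac]
          simp_all
      · by_cases hil : i = l
        · by_cases hjk : j = k
          · -- pairing i=l, j=k
            subst hil; subst hjk
            have hp : ∏ m, (∫ ω, (ε m ω) ^ ν m ∂μ) = 1 := by
              apply Finset.prod_eq_one
              intro m _
              by_cases him : i = m
              · subst him
                have hji : ¬ j = i := fun h => hij h.symm
                simp [hνdef, hji, h2]
              · by_cases hjm : j = m
                · subst hjm; simp [hνdef, him, h2]
                · simp [hνdef, him, hjm]
            rw [hp]; simp [hij, hik]
          · -- i = l, j ≠ k : odd at j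
            have hfac : (∫ ω, (ε j ω) ^ ν j ∂μ) = 0 := by
              have hlj : ¬ l = j := fun h => hij (hil.trans h)
              have : ν j = 1 := by
                have hkj : ¬ k = j := fun h => hjk h.symm
                simp [hνdef, hlj, hkj, hij]
              rw [this]; simpa using hmean j
            rw [Finset.prod_eq_zero (Finset.mem_univ j) hfac]
            simp_all
        · -- i alone : odd at i
          have hfac : (∫ ω, (ε i ω) ^ ν i ∂μ) = 0 := by
            have : ν i = 1 := by
              have hji : ¬ j = i := fun h => hij h.symm
              have hki : ¬ k = i := fun h => hik h.symm
              have hli : ¬ l = i := fun h => hil h.symm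
              simp [hνdef, hji, hki, hli]
            rw [this]; simpa using hmean i
          rw [Finset.prod_eq_zero (Finset.mem_univ i) hfac]
          simp_all

/-- If `ε : Fin d → Ω → ℝ` has independent coordinates with
`E[ε i] = E[(ε i)^3] = 0`, `E[(ε i)^2] = 1` and `E[(ε i)^4] ≥ 1 + c` for some `c > 0`,
then for every symmetric matrix `A`, `E[(εᵀ A ε)^2] ≥ min 2 c * ‖A‖_F²`. -/
theorem stmt0 {Ω : Type*} [MeasurableSpace Ω] {μ : Measure Ω} [IsProbabilityMeasure μ]
    {d : ℕ} (ε : Fin d → Ω → ℝ)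
    (hindep : iIndepFun ε μ)
    (hmeas : ∀ i, Measurable (ε i))
    (hL4 : ∀ i, MemLp (ε i) 4 μ)
    (c : ℝ) (hc : 0 < c)
    (hmean : ∀ i, ∫ ω, ε i ω ∂μ = 0)
    (h3 : ∀ i, ∫ ω, (ε i ω) ^ 3 ∂μ = 0)
    (h2 : ∀ i, ∫ ω, (ε i ω) ^ 2 ∂μ = 1)
    (h4 : ∀ i, 1 + c ≤ ∫ ω, (ε i ω) ^ 4 ∂μ)
    (A : Matrix (Fin d) (Fin d) ℝ) (hA : A.IsSymm) :
    min 2 c * ∑ i, ∑ j, (A i j) ^ 2 ≤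
      ∫ ω, (∑ i, ∑ j, ε i ω * A i j * ε j ω) ^ 2 ∂μ := by
  classical
  set T : (Fin d × Fin d) → (Fin d × Fin d) → Ω → ℝ := fun p q ω =>
    A p.1 p.2 * A q.1 q.2 * (ε p.1 ω * ε p.2 ω * ε q.1 ω * ε q.2 ω) with hT
  have hE4 := fun i j k l => aux_E4 ε hindep hmeas hL4 hmean h3 h2 i j k l
  have hTint : ∀ p q, Integrable (T p q) μ := fun p q =>
    ((hE4 p.1 p.2 q.1 q.2).1).const_mul _
  have hTval : ∀ p q : Fin d × Fin d, ∫ ω, T p q ω ∂μ =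
      A p.1 p.2 * A q.1 q.2 *
      ((if p.1 = p.2 then (1:ℝ) else 0) * (if q.1 = q.2 then 1 else 0)
      + (if p.1 = q.1 then (1:ℝ) else 0) * (if p.2 = q.2 then 1 else 0)
      + (if p.1 = q.2 then (1:ℝ) else 0) * (if p.2 = q.1 then 1 else 0)
      + (if p.1 = p.2 ∧ p.2 = q.1 ∧ q.1 = q.2 then (∫ ω, (ε p.1 ω) ^ 4 ∂μ) - 3 else 0)) := by
    intro p q
    rw [hT]
    simp only []
    rw [integral_const_mul, (hE4 p.1 p.2 q.1 q.2).2]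
  have h1 : ∀ ω, (∑ i, ∑ j, ε i ω * A i j * ε j ω) ^ 2
      = ∑ p : Fin d × Fin d, ∑ q : Fin d × Fin d, T p q ω := by
    intro ω
    have e1 : (∑ i, ∑ j, ε i ω * A i j * ε j ω)
        = ∑ p : Fin d × Fin d, ε p.1 ω * A p.1 p.2 * ε p.2 ω := by
      rw [Fintype.sum_prod_type]
    rw [e1, sq, Finset.sum_mul_sum]
    refine Finset.sum_congr rfl fun p _ => Finset.sum_congr rfl fun q _ => ?_
    rw [hT]; ring
  have h2' : ∫ ω, (∑ i, ∑ j, ε i ω * A i j * ε j ω) ^ 2 ∂μ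
      = ∑ p : Fin d × Fin d, ∑ q : Fin d × Fin d, ∫ ω, T p q ω ∂μ := by
    simp only [h1]
    rw [integral_finset_sum _ (fun p _ => integrable_finset_sum _ (fun q _ => hTint p q))]
    exact Finset.sum_congr rfl fun p _ => integral_finset_sum _ (fun q _ => hTint p q)
  rw [h2']
  have key : ∑ p : Fin d × Fin d, ∑ q : Fin d × Fin d, ∫ ω, T p q ω ∂μ
      = (∑ i, A i i) ^ 2 + (∑ i, ∑ j, (A i j) ^ 2) + (∑ i, ∑ j, A i j * A j i)
        + ∑ i, (A i i) ^ 2 * ((∫ ω, (ε i ω) ^ 4 ∂μ) - 3) := by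
    simp only [hTval, Fintype.sum_prod_type]
    simp only [mul_add, Finset.sum_add_distrib]
    congr 1
    · congr 1
      · congr 1
        · rw [sq, Finset.sum_mul_sum]
          simp [mul_ite, ite_mul, mul_zero, zero_mul, mul_one, Finset.sum_ite_eq]
        · simp [mul_ite, ite_mul, mul_zero, zero_mul, mul_one, Finset.sum_ite_eq, sq]
      · simp [mul_ite, ite_mul, mul_zero, zero_mul, mul_one, Finset.sum_ite_eq]
    · simp [ite_and, mul_ite, ite_mul, mul_zero, zero_mul, mul_one, Finset.sum_ite_eq, sq]
  rw [key]
  have hsymm : (∑ i, ∑ j, A i j * A j i) = ∑ i, ∑ j, (A i j) ^ 2 :=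
    Finset.sum_congr rfl fun i _ => Finset.sum_congr rfl fun j _ => by
      rw [hA.apply j i, sq]
  rw [hsymm]
  set P : ℝ := ∑ i, ∑ j, (A i j) ^ 2 with hP
  set D : ℝ := ∑ i, (A i i) ^ 2 with hD
  have hDP : D ≤ P := by
    apply Finset.sum_le_sum
    intro i _
    exact Finset.single_le_sum (f := fun j => (A i j) ^ 2)
      (fun j _ => sq_nonneg _) (Finset.mem_univ i)
  have hDnn : 0 ≤ D := Finset.sum_nonneg fun i _ => sq_nonneg _
  have hlast : (c - 2) * D ≤ ∑ i, (A i i) ^ 2 * ((∫ ω, (ε i ω) ^ 4 ∂μ) - 3) := by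
    rw [hD, Finset.mul_sum]
    apply Finset.sum_le_sum
    intro i _
    have := h4 i
    nlinarith [sq_nonneg (A i i)]
  have htr : 0 ≤ (∑ i, A i i) ^ 2 := sq_nonneg _
  have hmin2 : min 2 c ≤ 2 := min_le_left _ _
  have hminc : min 2 c ≤ c := min_le_right _ _
  nlinarith [mul_le_mul_of_nonneg_right hmin2 (hDnn.trans (le_trans (le_refl D) hDP) : (0:ℝ) ≤ P)]
end

section
/- Let α*, β* ∈ R^d satisfy ‖α*‖_2 ≥ c, ‖β*‖_2 ≥ c for some c > 0 and |(α*)^T β*| ≤ (1 - c')‖α*‖_2 ‖β*‖_2 for some c' ∈ (0,1). Let (u,v) ∈ R^{2d} be a unit vector orthogonal to (α*, 2β*), i.e., u^T α* + 2 v^T β* = 0. Define A = β* u^T + u(β*)^T - (1/2) α* v^T - (1/2) v(α*)^T. Then ‖A‖_F^2 ≥ c' · min(2‖β*‖_2^2, (1/2)‖α*‖_2^2) ≥ c' c^2 / 2. -/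
open BigOperators

set_option maxHeartbeats 1000000 in
/-- If `‖α*‖₂ ≥ c`, `‖β*‖₂ ≥ c`, `|α*ᵀβ*| ≤ (1-c')‖α*‖₂‖β*‖₂` and `(u,v)`
is a unit vector orthogonal to `(α*, 2β*)`, then for
`A = β* uᵀ + u β*ᵀ - (1/2) α* vᵀ - (1/2) v α*ᵀ` one has
`‖A‖_F² ≥ c' · min(2‖β*‖₂², (1/2)‖α*‖₂²) ≥ c' c² / 2`. -/
theorem stmt5 {d : ℕ} (c c' : ℝ) (hc : 0 < c) (hc'0 : 0 < c') (hc'1 : c' < 1)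
    (α β u v : Fin d → ℝ)
    (hα : c ≤ Real.sqrt (∑ i, α i ^ 2))
    (hβ : c ≤ Real.sqrt (∑ i, β i ^ 2))
    (hcol : |∑ i, α i * β i| ≤
      (1 - c') * Real.sqrt (∑ i, α i ^ 2) * Real.sqrt (∑ i, β i ^ 2))
    (hunit : ∑ i, u i ^ 2 + ∑ i, v i ^ 2 = 1)
    (horth : (∑ i, u i * α i) + 2 * ∑ i, v i * β i = 0)
    (A : Matrix (Fin d) (Fin d) ℝ)
    (hA : ∀ i j, A i j =
      β i * u j + u i * β j - (1/2) * α i * v j - (1/2) * v i * α j) :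
    c' * min (2 * ∑ i, β i ^ 2) ((1/2) * ∑ i, α i ^ 2) ≤ ∑ i, ∑ j, (A i j) ^ 2 ∧
      c' * c ^ 2 / 2 ≤ c' * min (2 * ∑ i, β i ^ 2) ((1/2) * ∑ i, α i ^ 2) := by
  set a := ∑ i, α i ^ 2 with ha_def
  set b := ∑ i, β i ^ 2 with hb_def
  set U := ∑ i, u i ^ 2 with hU_def
  set V := ∑ i, v i ^ 2 with hV_def
  set s := ∑ i, α i * β i with hs_def
  set m := ∑ i, u i * v i with hm_def
  set p := ∑ i, u i * α i with hp_def
  set q := ∑ i, v i * β i with hq_def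
  set r := ∑ i, u i * β i with hr_def
  set t := ∑ i, α i * v i with ht_def
  have ha0 : 0 ≤ a := Finset.sum_nonneg fun i _ => sq_nonneg _
  have hb0 : 0 ≤ b := Finset.sum_nonneg fun i _ => sq_nonneg _
  have hU0 : 0 ≤ U := Finset.sum_nonneg fun i _ => sq_nonneg _
  have hV0 : 0 ≤ V := Finset.sum_nonneg fun i _ => sq_nonneg _
  have hac : c ^ 2 ≤ a := by
    have h := mul_self_le_mul_self hc.le hα
    have h2 := Real.sq_sqrt ha0
    nlinarith [h, h2]
  have hbc : c ^ 2 ≤ b := by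
    have h := mul_self_le_mul_self hc.le hβ
    have h2 := Real.sq_sqrt hb0
    nlinarith [h, h2]
  -- squared correlation bound
  have hs2 : s ^ 2 ≤ (1 - c') ^ 2 * (a * b) := by
    have h1 : |s| ^ 2 ≤ ((1 - c') * Real.sqrt a * Real.sqrt b) ^ 2 := by
      apply pow_le_pow_left₀ (abs_nonneg _) hcol _
    rw [sq_abs] at h1
    have h2 : ((1 - c') * Real.sqrt a * Real.sqrt b) ^ 2
        = (1 - c') ^ 2 * (a * b) := by
      rw [mul_pow, mul_pow, Real.sq_sqrt ha0, Real.sq_sqrt hb0]; ring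
    linarith [h1, h2.le, h2.ge]
  -- Cauchy-Schwarz
  have hm2 : m ^ 2 ≤ U * V := Finset.sum_mul_sq_le_sq_mul_sq Finset.univ u v
  -- key expansion of the Frobenius norm
  have key : ∑ i, ∑ j, (A i j) ^ 2 =
      2 * b * U + (1/2) * a * V + 2 * r ^ 2 + (1/2) * t ^ 2
        - 2 * s * m - 2 * p * q := by
    have step : ∀ i, ∑ j, (A i j) ^ 2 =
        β i ^ 2 * U + u i ^ 2 * b + (1/4) * α i ^ 2 * V + (1/4) * v i ^ 2 * a
          + 2 * (β i * u i) * r - (α i * β i) * m - (β i * v i) * p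
          - (u i * α i) * q - (u i * v i) * s + (1/2) * (α i * v i) * t := by
      intro i
      have expand : ∀ j, (A i j) ^ 2 =
          β i ^ 2 * u j ^ 2 + u i ^ 2 * β j ^ 2 + (1/4) * α i ^ 2 * v j ^ 2
            + (1/4) * v i ^ 2 * α j ^ 2
            + 2 * (β i * u i) * (u j * β j) - (α i * β i) * (u j * v j)
            - (β i * v i) * (u j * α j) - (u i * α i) * (v j * β j)
            - (u i * v i) * (α j * β j) + (1/2) * (α i * v i) * (α j * v j) := by
        intro j; rw [hA]; ring
      rw [Finset.sum_congr rfl fun j _ => expand j]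
      simp only [Finset.sum_add_distrib, Finset.sum_sub_distrib, ← Finset.mul_sum]
      rfl
    rw [Finset.sum_congr rfl fun i _ => step i]
    simp only [Finset.sum_add_distrib, Finset.sum_sub_distrib, ← Finset.sum_mul]
    have e1 : ∑ i, β i ^ 2 = b := rfl
    have e2 : ∑ i, u i ^ 2 = U := rfl
    have e3 : (∑ i, (1/4 : ℝ) * α i ^ 2) = (1/4) * a := by
      rw [← Finset.mul_sum]
    have e4 : (∑ i, (1/4 : ℝ) * v i ^ 2) = (1/4) * V := by
      rw [← Finset.mul_sum]
    have e5 : (∑ i, 2 * (β i * u i)) = 2 * r := by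
      rw [← Finset.mul_sum]; congr 1; apply Finset.sum_congr rfl; intros; ring
    have e6 : (∑ i, α i * β i) = s := rfl
    have e7 : (∑ i, β i * v i) = q := by
      apply Finset.sum_congr rfl; intros; ring
    have e8 : (∑ i, u i * α i) = p := rfl
    have e9 : (∑ i, u i * v i) = m := rfl
    have e10 : (∑ i, (1/2 : ℝ) * (α i * v i)) = (1/2) * t := by
      rw [← Finset.mul_sum]
    rw [e1, e2, e3, e4, e5, e6, e7, e8, e9, e10]
    ring
  -- p = -2q
  have hpq : p = -2 * q := by linarith
  -- main cross term bound : 2*s*m ≤ (1-c') * (2*b*U + (1/2)*a*V)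
  have hcross : 2 * s * m ≤ (1 - c') * (2 * b * U + (1/2) * a * V) := by
    have hRnn : 0 ≤ (1 - c') * (2 * b * U + (1/2) * a * V) := by
      apply mul_nonneg (by linarith)
      have := mul_nonneg hb0 hU0
      have := mul_nonneg ha0 hV0
      nlinarith [mul_nonneg hb0 hU0, mul_nonneg ha0 hV0]
    have h5 : s ^ 2 * m ^ 2 ≤ ((1 - c') ^ 2 * (a * b)) * (U * V) :=
      mul_le_mul hs2 hm2 (sq_nonneg m) (mul_nonneg (sq_nonneg _) (mul_nonneg ha0 hb0))
    have hsq : (2 * s * m) ^ 2 ≤ ((1 - c') * (2 * b * U + (1/2) * a * V)) ^ 2 := by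
      have e : ((1 - c') * (2 * b * U + (1/2) * a * V)) ^ 2
          - 4 * (((1 - c') ^ 2 * (a * b)) * (U * V))
          = (1 - c') ^ 2 * (2 * b * U - (1/2) * a * V) ^ 2 := by ring
      have hnn := mul_nonneg (sq_nonneg (1 - c')) (sq_nonneg (2 * b * U - (1/2) * a * V))
      have e2 : (2 * s * m) ^ 2 = 4 * (s ^ 2 * m ^ 2) := by ring
      linarith [h5, e, hnn, e2.le, e2.ge]
    have h6 : |2 * s * m| ≤ |(1 - c') * (2 * b * U + (1/2) * a * V)| := by
      have h7 := Real.sqrt_le_sqrt hsq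
      rwa [Real.sqrt_sq_eq_abs, Real.sqrt_sq_eq_abs] at h7
    have h8 := le_abs_self (2 * s * m)
    have h9 := abs_of_nonneg hRnn
    linarith
  set M := min (2 * b) ((1/2) * a) with hM_def
  have hM1 : M ≤ 2 * b := min_le_left _ _
  have hM2 : M ≤ (1/2) * a := min_le_right _ _
  have hM0 : 0 ≤ M := le_min (by linarith) (by linarith)
  constructor
  · rw [key, hpq]
    have h1 : c' * M = c' * M * U + c' * M * V := by
      have h : c' * M = c' * M * (U + V) := by rw [hunit]; ring
      linarith [h, mul_add (c' * M) U V]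
    have h2 : c' * M * U ≤ c' * (2 * b) * U := by
      apply mul_le_mul_of_nonneg_right _ hU0
      exact mul_le_mul_of_nonneg_left hM1 hc'0.le
    have h3 : c' * M * V ≤ c' * ((1/2) * a) * V := by
      apply mul_le_mul_of_nonneg_right _ hV0
      exact mul_le_mul_of_nonneg_left hM2 hc'0.le
    have h4 : c' * (2 * b) * U + c' * ((1/2) * a) * V
        = (2 * b * U + (1/2) * a * V) - (1 - c') * (2 * b * U + (1/2) * a * V) := by ring
    linarith [h1, h2, h3, h4, hcross, sq_nonneg r, sq_nonneg t, sq_nonneg q]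
  · have : c ^ 2 / 2 ≤ M := le_min (by linarith) (by linarith)
    calc c' * c ^ 2 / 2 = c' * (c ^ 2 / 2) := by ring
      _ ≤ c' * M := mul_le_mul_of_nonneg_left this hc'0.le
end
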